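/- arXiv:2205.00041 — 2 statements merged into one kernel-verified Lean document; each statement's English description precedes it below -/
import Mathlib

section
/- Every divisor of degree 0 on an elliptic curve is linearly equivalent (i.e. equal modulo principal divisors) to a divisor of the form [p] − [O] for some point p on the curve. -/
open WeierstrassCurve Finsupp FractionalIdeal
open scoped nonZeroDivisors

variable {F : Type*} [Field F]

/-- The invertible fractional ideal of the affine coordinate ring attached to a point of an
elliptic curve: the point at infinity `O` gives the unit ideal, and an affine point gives the
maximal ideal of functions vanishing at it.  Under the divisor/fractional-ideal correspondence
for the affine curve, a degree-zero divisor `D = Σ nᵢ [pᵢ] + n_O [O]` is the divisor of a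
nonzero rational function `f` precisely when the fractional ideal `Π (ideal of pᵢ)^nᵢ` is the
principal fractional ideal generated by `f` (the multiplicity at `O` being determined by the
degree-zero condition). -/
noncomputable def pointIdeal {W : WeierstrassCurve F} :
    W.toAffine.Point →
      (FractionalIdeal (W.toAffine.CoordinateRing)⁰ W.toAffine.FunctionField)ˣ
  | .zero => 1
  | .some _ _ h => Affine.CoordinateRing.XYIdeal' h

/-- The fractional ideal attached to the (affine part of the) divisor `D`. -/
noncomputable def divisorIdeal {W : WeierstrassCurve F} (D : W.toAffine.Point →₀ ℤ) :
    (FractionalIdeal (W.toAffine.CoordinateRing)⁰ W.toAffine.FunctionField)ˣ :=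
  D.support.prod fun p => pointIdeal p ^ D p

/-- The degree of a divisor. -/
def divDegree {W : WeierstrassCurve F} (D : W.toAffine.Point →₀ ℤ) : ℤ := D.sum fun _ n => n

open Classical in
/-- The weighted sum of the points of a divisor for the elliptic addition law. -/
noncomputable def divPointSum {W : WeierstrassCurve F} (D : W.toAffine.Point →₀ ℤ) :
    W.toAffine.Point :=
  D.sum fun p n => n • p


open Classical in
lemma toClass_eq_mk_pointIdeal {W : WeierstrassCurve F} (p : W.toAffine.Point) :
    Affine.Point.toClass p = Additive.ofMul (ClassGroup.mk W.toAffine.FunctionField (pointIdeal p)) := by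
  cases p with
  | zero => simp [pointIdeal, Affine.Point.toClass_zero]
  | some h => rfl

open Classical in
lemma classGroup_mk_divisorIdeal_eq {W : WeierstrassCurve F} (D : W.toAffine.Point →₀ ℤ) :
    ClassGroup.mk W.toAffine.FunctionField (divisorIdeal D) =
      ClassGroup.mk W.toAffine.FunctionField (pointIdeal (divPointSum D)) := by
  have h := map_finsuppSum (Affine.Point.toClass (W := W.toAffine)) D (fun p n => n • p)
  simp only [map_zsmul, toClass_eq_mk_pointIdeal] at h
  have h2 : Additive.ofMul (ClassGroup.mk W.toAffine.FunctionField (divisorIdeal D)) =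
      D.sum fun a b => b • Additive.ofMul (ClassGroup.mk W.toAffine.FunctionField (pointIdeal a)) := by
    rw [divisorIdeal, map_prod, ofMul_prod, Finsupp.sum]
    exact Finset.sum_congr rfl fun p _ => by rw [map_zpow, ofMul_zpow]
  exact Additive.ofMul.injective (h2.trans h.symm)

/-- every degree-zero divisor `D` on an elliptic curve is linearly equivalent,
modulo divisors of nonzero rational functions, to `[p] − [O]` for some point `p`:
`D = div(f) + [p] − [O]` as (affine parts of) divisors, read through the divisor/fractional
ideal correspondence. -/
theorem divisor_equiv_point_sub_zero (W : WeierstrassCurve F) [W.IsElliptic]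
    (D : W.toAffine.Point →₀ ℤ) (hdeg : divDegree D = 0) :
    ∃ (p : W.toAffine.Point) (f : W.toAffine.FunctionField), f ≠ 0 ∧
      (divisorIdeal D : FractionalIdeal (W.toAffine.CoordinateRing)⁰ W.toAffine.FunctionField) =
        spanSingleton (W.toAffine.CoordinateRing)⁰ f *
          ((pointIdeal p * (pointIdeal (0 : W.toAffine.Point))⁻¹ :
            (FractionalIdeal (W.toAffine.CoordinateRing)⁰ W.toAffine.FunctionField)ˣ) :
            FractionalIdeal (W.toAffine.CoordinateRing)⁰ W.toAffine.FunctionField) := by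
  obtain ⟨x, hx⟩ := ClassGroup.mk_eq_mk.mp (classGroup_mk_divisorIdeal_eq D).symm
  refine ⟨divPointSum D, x, x.ne_zero, ?_⟩
  have h0 : pointIdeal (0 : W.toAffine.Point) = 1 := rfl
  rw [h0, inv_one, mul_one, ← hx, Units.val_mul, coe_toPrincipalIdeal, mul_comm]
end

section
/- Let E be an elliptic curve over a number field K, δ ∈ E(K), and J a maximal ideal of K[u,v] containing the defining equation of E. If δ is not a torsion point, then no two distinct roots of J lie on the same orbit under translation by δ. -/
open WeierstrassCurve Polynomial
open scoped WeierstrassCurve.Affine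

variable {K : Type*} [Field K]

/-- `(x, y) ∈ K̄²` is a root of an ideal `J` of `K[u,v] = K[X][Y]` if every element of `J`
vanishes at `(x, y)`. -/
def IsRootOf (J : Ideal (Polynomial (Polynomial K))) (x y : AlgebraicClosure K) : Prop :=
  ∀ f ∈ J, ((f.map (mapRingHom (algebraMap K (AlgebraicClosure K)))).evalEval x y) = 0

/-- Evaluation of a bivariate polynomial over `K` at a point of `K̄²`, as a `K`-algebra
homomorphism. -/
noncomputable def evalEvalAlgHom' (x y : AlgebraicClosure K) :
    Polynomial (Polynomial K) →ₐ[K] AlgebraicClosure K where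
  toRingHom := (evalEvalRingHom x y).comp
    (mapRingHom (mapRingHom (algebraMap K (AlgebraicClosure K))))
  commutes' := fun c => by
    simp [coe_algebraMap_eq_CC, CC, evalEval_C]

/-- Two roots of a maximal ideal of `K[u,v]` are Galois conjugate. -/
theorem exists_conj_of_isRootOf (J : Ideal (Polynomial (Polynomial K))) (hJ : J.IsMaximal)
    {x₁ y₁ x₂ y₂ : AlgebraicClosure K}
    (h₁ : IsRootOf J x₁ y₁) (h₂ : IsRootOf J x₂ y₂) :
    ∃ ψ : AlgebraicClosure K →ₐ[K] AlgebraicClosure K, ψ x₁ = x₂ ∧ ψ y₁ = y₂ := by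
  haveI := hJ
  have h₁' : ∀ f ∈ J, evalEvalAlgHom' x₁ y₁ f = 0 := h₁
  have h₂' : ∀ f ∈ J, evalEvalAlgHom' x₂ y₂ f = 0 := h₂
  letI : Field (Polynomial (Polynomial K) ⧸ J) := Ideal.Quotient.field J
  let φ₁ := Ideal.Quotient.liftₐ J (evalEvalAlgHom' x₁ y₁) h₁'
  let φ₂ := Ideal.Quotient.liftₐ J (evalEvalAlgHom' x₂ y₂) h₂'
  letI : Algebra (Polynomial (Polynomial K) ⧸ J) (AlgebraicClosure K) := φ₁.toRingHom.toAlgebra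
  haveI : IsScalarTower K (Polynomial (Polynomial K) ⧸ J) (AlgebraicClosure K) :=
    IsScalarTower.of_algebraMap_eq'
      (by ext c; exact (φ₁.commutes c).symm :
        algebraMap K (AlgebraicClosure K) =
          (algebraMap (Polynomial (Polynomial K) ⧸ J) (AlgebraicClosure K)).comp
            (algebraMap K _))
  haveI : Algebra.IsAlgebraic (Polynomial (Polynomial K) ⧸ J) (AlgebraicClosure K) :=
    Algebra.IsAlgebraic.tower_top (K := K) _
  obtain ⟨ψ, hψ⟩ := IsAlgClosed.surjective_restrictDomain_of_isAlgebraic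
    (K := K) (M := AlgebraicClosure K) (E := AlgebraicClosure K)
    (L := Polynomial (Polynomial K) ⧸ J) φ₂
  have key : ∀ a, ψ (φ₁ a) = φ₂ a := fun a => DFunLike.congr_fun hψ a
  refine ⟨ψ, ?_, ?_⟩
  · have := key (Ideal.Quotient.mk J (C X))
    simpa [φ₁, φ₂, Ideal.Quotient.liftₐ_apply, evalEvalAlgHom', evalEval_C] using this
  · have := key (Ideal.Quotient.mk J (X : Polynomial (Polynomial K)))
    simpa [φ₁, φ₂, Ideal.Quotient.liftₐ_apply, evalEvalAlgHom'] using this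

/-- Congruence lemma for affine points. -/
theorem Affine.Point.some_congr' {R : Type*} [CommRing R] {W : WeierstrassCurve.Affine R}
    {x y x' y' : R} (hx : x = x') (hy : y = y')
    (h : W.Nonsingular x y) (h' : W.Nonsingular x' y') :
    WeierstrassCurve.Affine.Point.some _ _ h = WeierstrassCurve.Affine.Point.some _ _ h' := by
  subst hx; subst hy; rfl

/-- Iterates of a `K`-algebra endomorphism of `K̄` stay within the (finite) set of roots of
the minimal polynomial. -/
theorem aeval_iterate_minpoly [NumberField K]
    (ψ : AlgebraicClosure K →ₐ[K] AlgebraicClosure K) (z : AlgebraicClosure K) (k : ℕ) :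
    aeval ((⇑ψ)^[k] z) (minpoly K z) = 0 := by
  induction k with
  | zero => exact minpoly.aeval K z
  | succ n ih => rw [Function.iterate_succ_apply', aeval_algHom_apply, ih, map_zero]

open scoped Classical in
/-- if `δ ∈ E(K)` is non-torsion and `J` is a maximal ideal of `K[u,v]`
containing the Weierstrass equation of `E`, then two roots of `J` lying on the same orbit
under translation by `δ` must coincide. -/
theorem roots_of_maximal_ideal_distinct_orbits [NumberField K]
    (E : WeierstrassCurve K) [E.IsElliptic] (δ : (E.baseChange K).toAffine.Point)
    (hδ : ∀ N : ℕ, 0 < N → N • δ ≠ 0)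
    (J : Ideal (Polynomial (Polynomial K))) (hJ : J.IsMaximal)
    (hJE : E.toAffine.polynomial ∈ J)
    {x₁ y₁ x₂ y₂ : AlgebraicClosure K}
    (h₁ : IsRootOf J x₁ y₁) (h₂ : IsRootOf J x₂ y₂)
    (hns₁ : (E.baseChange (AlgebraicClosure K)).toAffine.Nonsingular x₁ y₁)
    (hns₂ : (E.baseChange (AlgebraicClosure K)).toAffine.Nonsingular x₂ y₂)
    (N : ℤ)
    (horb : Affine.Point.some _ _ hns₂ = Affine.Point.some _ _ hns₁ +
      N • Affine.Point.map (W' := E) (Algebra.ofId K (AlgebraicClosure K)) δ) :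
    x₁ = x₂ ∧ y₁ = y₂ := by
  classical
  obtain ⟨ψ, hx, hy⟩ := exists_conj_of_isRootOf J hJ h₁ h₂
  set d := Affine.Point.map (W' := E) (Algebra.ofId K (AlgebraicClosure K)) δ with hd
  -- the conjugation fixes `δ`
  have hσd : Affine.Point.map (W' := E) ψ d = d := by
    have hcomp : ψ.comp (Algebra.ofId K (AlgebraicClosure K)) =
        Algebra.ofId K (AlgebraicClosure K) := AlgHom.ext fun c => ψ.commutes c
    rw [hd, Affine.Point.map_map, hcomp]
  have hσP : Affine.Point.map (W' := E) ψ (Affine.Point.some _ _ hns₁) = Affine.Point.some _ _ hns₂ := by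
    rw [Affine.Point.map_some]
    exact Affine.Point.some_congr' hx hy _ _
  -- iterating the conjugation translates by `N • d` each time
  have hiter : ∀ k : ℕ, (⇑(Affine.Point.map (W' := E) ψ))^[k] (Affine.Point.some _ _ hns₁) =
      Affine.Point.some _ _ hns₁ + (k : ℤ) • (N • d) := by
    intro k
    induction k with
    | zero => simp
    | succ n ih =>
      rw [Function.iterate_succ_apply', ih, map_add, map_zsmul, map_zsmul, hσd, hσP, horb]
      push_cast
      rw [add_smul, one_smul]
      abel
  -- the iterates are affine points with coordinates the iterates of the coordinates
  have hcoord : ∀ k : ℕ, ∃ h : (E.baseChange (AlgebraicClosure K)).toAffine.Nonsingular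
      ((⇑ψ)^[k] x₁) ((⇑ψ)^[k] y₁),
      (⇑(Affine.Point.map (W' := E) ψ))^[k] (Affine.Point.some _ _ hns₁) = Affine.Point.some _ _ h := by
    intro k
    induction k with
    | zero => exact ⟨hns₁, rfl⟩
    | succ n ih =>
      obtain ⟨h, hh⟩ := ih
      refine ⟨?_, ?_⟩
      · rw [Function.iterate_succ_apply', Function.iterate_succ_apply']
        exact (Affine.baseChange_nonsingular (W := E.toAffine) ψ.injective _ _).mpr h
      · rw [Function.iterate_succ_apply', hh, Affine.Point.map_some]
        exact Affine.Point.some_congr' (Function.iterate_succ_apply' _ _ _).symm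
          (Function.iterate_succ_apply' _ _ _).symm _ _
  -- pigeonhole: two iterates have the same coordinates
  have hint : ∀ z : AlgebraicClosure K, IsIntegral K z := fun z =>
    (Algebra.IsAlgebraic.isAlgebraic z).isIntegral
  have hmem : ∀ (z : AlgebraicClosure K) (k : ℕ),
      (⇑ψ)^[k] z ∈ (minpoly K z).rootSet (AlgebraicClosure K) := fun z k =>
    (mem_rootSet).mpr ⟨minpoly.ne_zero (hint z), aeval_iterate_minpoly ψ z k⟩
  obtain ⟨a, b, hab, hfeq⟩ : ∃ a b : ℕ, a ≠ b ∧
      ((⇑ψ)^[a] x₁ = (⇑ψ)^[b] x₁ ∧ (⇑ψ)^[a] y₁ = (⇑ψ)^[b] y₁) := by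
    have := Finite.exists_ne_map_eq_of_infinite
      (fun k : ℕ => ((⟨(⇑ψ)^[k] x₁, hmem x₁ k⟩ : (minpoly K x₁).rootSet (AlgebraicClosure K)),
        (⟨(⇑ψ)^[k] y₁, hmem y₁ k⟩ : (minpoly K y₁).rootSet (AlgebraicClosure K))))
    obtain ⟨a, b, hab, h⟩ := this
    refine ⟨a, b, hab, ?_, ?_⟩
    · exact congrArg (fun p => (p.1 : AlgebraicClosure K)) h
    · exact congrArg (fun p => (p.2 : AlgebraicClosure K)) h
  -- hence the translation amounts are equal
  have hsmul : (a : ℤ) • (N • d) = (b : ℤ) • (N • d) := by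
    obtain ⟨ha', hea⟩ := hcoord a
    obtain ⟨hb', heb⟩ := hcoord b
    have : (⇑(Affine.Point.map (W' := E) ψ))^[a] (Affine.Point.some _ _ hns₁) =
        (⇑(Affine.Point.map (W' := E) ψ))^[b] (Affine.Point.some _ _ hns₁) := by
      rw [hea, heb]
      exact Affine.Point.some_congr' hfeq.1 hfeq.2 _ _
    rw [hiter a, hiter b] at this
    exact add_left_cancel this
  have hz : (((b : ℤ) - a) * N) • d = 0 := by
    rw [← smul_smul, sub_smul, hsmul, sub_self]
  -- transfer to `E(K)` and conclude `N = 0`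
  have hN : N = 0 := by
    by_contra hN
    have hz' : (((b : ℤ) - a) * N) • δ = 0 := by
      apply Affine.Point.map_injective (W' := E) (Algebra.ofId K (AlgebraicClosure K))
      rw [map_zsmul, map_zero]
      exact hz
    set z : ℤ := ((b : ℤ) - a) * N with hzdef
    have hzne : z ≠ 0 := mul_ne_zero (sub_ne_zero.mpr (by exact_mod_cast hab.symm)) hN
    refine hδ z.natAbs (Int.natAbs_pos.mpr hzne) ?_
    have : ((z.natAbs : ℤ)) • δ = 0 := by
      rcases Int.natAbs_eq z with h | h
      · rw [← h]; exact hz'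
      · have hn : (z.natAbs : ℤ) = -z := by omega
        rw [hn, neg_smul, hz', neg_zero]
    rwa [natCast_zsmul] at this
  rw [hN, zero_smul, add_zero] at horb
  obtain ⟨hx', hy'⟩ := Affine.Point.some.inj horb
  exact ⟨hx'.symm, hy'.symm⟩
end
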